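/- Let f : ℝ^N → ℝ be continuously differentiable with a global minimizer x*, and suppose there exists c > 0 such that ∫_0^1 ‖∇f(x* + t·(x − x*))‖ dt ≤ c·‖∇f(x)‖ for all x ∈ ℝ^N. Then f(x) − f(x*) ≤ c·‖∇f(x)‖·‖x − x*‖ for all x ∈ ℝ^N; that is, f is weakly Polyak–ated with parameter 1/c², i.e. f ∈ W_PL(1/c²). -/

import Mathlib

open intervalIntegral

/-- **Proposition 6.22.** If `f` is continuously differentiable with global minimizer `x*`
and `∫₀¹ ‖∇f(x* + t(x − x*))‖ dt ≤ c‖∇f(x)‖` for all `x`, then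
`f(x) − f(x*) ≤ c‖∇f(x)‖·‖x − x*‖` for all `x`; that is, `f ∈ W_PL(1/c²)`. -/
theorem stmt_18 (N : ℕ) (f : EuclideanSpace ℝ (Fin N) → ℝ)
    (hf : ContDiff ℝ 1 f)
    (xstar : EuclideanSpace ℝ (Fin N)) (hmin : ∀ y, f xstar ≤ f y)
    (c : ℝ) (hc : 0 < c)
    (hint : ∀ x : EuclideanSpace ℝ (Fin N),
      (∫ t in (0:ℝ)..1, ‖gradient f (xstar + t • (x - xstar))‖) ≤ c * ‖gradient f x‖) :
    ∀ x : EuclideanSpace ℝ (Fin N),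
      f x - f xstar ≤ c * ‖gradient f x‖ * ‖x - xstar‖ ∧
      Real.sqrt (1 / c ^ 2) * (f x - f xstar) ≤ ‖gradient f x‖ * ‖x - xstar‖ := by
  intro x
  set v := x - xstar with hv
  set γ : ℝ → EuclideanSpace ℝ (Fin N) := fun t => xstar + t • v with hγ
  have hdf : Differentiable ℝ f := hf.differentiable one_ne_zero
  have hγc : Continuous γ := by continuity
  have hγd : ∀ t : ℝ, HasDerivAt γ v t := fun t => by
    simpa only [id, one_smul] using ((hasDerivAt_id t).smul_const v).const_add xstar
  have hgc : Continuous (gradient f) := by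
    have : Continuous (fderiv ℝ f) := hf.continuous_fderiv one_ne_zero
    exact (InnerProductSpace.toDual ℝ _).symm.continuous.comp this
  have hgd : ∀ t : ℝ, HasDerivAt (f ∘ γ)
      (inner ℝ (gradient f (γ t)) v : ℝ) t := by
    intro t
    have h1 : HasFDerivAt f (InnerProductSpace.toDual ℝ _ (gradient f (γ t))) (γ t) :=
      ((hdf (γ t)).hasGradientAt).hasFDerivAt
    simpa [InnerProductSpace.toDual_apply_apply] using h1.comp_hasDerivAt t (hγd t)
  have hcontint : Continuous fun t => (inner ℝ (gradient f (γ t)) v : ℝ) :=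
    (continuous_inner.comp (((hgc.comp hγc).prodMk continuous_const)))
  have hftc : f x - f xstar = ∫ t in (0:ℝ)..1, (inner ℝ (gradient f (γ t)) v : ℝ) := by
    have := intervalIntegral.integral_eq_sub_of_hasDerivAt
      (fun t _ => hgd t) (hcontint.intervalIntegrable 0 1)
    simp only [Function.comp, hγ] at this
    rw [this]; simp [hv]
  have hmono : (∫ t in (0:ℝ)..1, (inner ℝ (gradient f (γ t)) v : ℝ))
      ≤ ∫ t in (0:ℝ)..1, ‖gradient f (γ t)‖ * ‖v‖ := by
    apply intervalIntegral.integral_mono_on (by norm_num)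
      (hcontint.intervalIntegrable 0 1)
      (((hgc.comp hγc).norm.mul continuous_const).intervalIntegrable 0 1)
    intro t _
    exact real_inner_le_norm _ _
  have hint2 : (∫ t in (0:ℝ)..1, ‖gradient f (γ t)‖ * ‖v‖)
      = (∫ t in (0:ℝ)..1, ‖gradient f (γ t)‖) * ‖v‖ := by
    rw [← intervalIntegral.integral_mul_const]
  have h1 : f x - f xstar ≤ c * ‖gradient f x‖ * ‖x - xstar‖ := by
    rw [hftc]
    refine hmono.trans ?_
    rw [hint2]
    have := hint x
    have hvnorm : (0:ℝ) ≤ ‖v‖ := norm_nonneg _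
    calc (∫ t in (0:ℝ)..1, ‖gradient f (γ t)‖) * ‖v‖
        ≤ (c * ‖gradient f x‖) * ‖v‖ := by
          apply mul_le_mul_of_nonneg_right _ hvnorm
          simpa [hγ, hv] using this
      _ = c * ‖gradient f x‖ * ‖x - xstar‖ := by rw [hv]
  refine ⟨h1, ?_⟩
  have hs : Real.sqrt (1 / c ^ 2) = 1 / c := by
    rw [one_div, Real.sqrt_inv, Real.sqrt_sq hc.le, one_div]
  rw [hs, one_div, inv_mul_le_iff₀ hc]
  calc f x - f xstar ≤ c * ‖gradient f x‖ * ‖x - xstar‖ := h1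
    _ = c * (‖gradient f x‖ * ‖x - xstar‖) := by ring
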